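/- The effect of a P-losing priority on the signature: if j is a P-losing number and σ_P(t) = (θ_{i'}, ..., θ_{k'}) ≠ ∞, then σ_P(p_j(t)) = (θ_{i'}, ..., θ_{j-2}, θ_j + 1, 0, ..., 0), i.e. the coordinate at j is incremented and all later coordinates are zeroed. -/

import Mathlib

namespace UnambSig

/-- The symbols of the alphabet `A^~_{i,k}`: unary priority symbols `p j`,
binary choice symbols of the two players (`true` is player 1), and the unary
player-swapping symbol `~`. -/
inductive Sym where
  | pri : ℕ → Sym
  | choice : Bool → Sym
  | neg : Sym
deriving DecidableEq

/-- Arity of a symbol. -/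
def Sym.arity : Sym → ℕ
  | .pri _ => 1
  | .choice _ => 2
  | .neg => 1

/-- A labelling of potential tree nodes (lists of directions, from the root). -/
abbrev Label := List ℕ → Option Sym

/-- `t` is a tree over the alphabet `A^~_{i,k}`: the root is defined, children
match arities, the domain is closed and priorities are within `{i,…,k}`. -/
def IsTree (t : Label) (i k : ℕ) : Prop :=
  t [] ≠ none ∧
  (∀ u s, t u = some s → ∀ d : ℕ, (t (u ++ [d]) ≠ none ↔ d < s.arity)) ∧
  (∀ u (d : ℕ), t u = none → t (u ++ [d]) = none) ∧
  (∀ u j, t u = some (Sym.pri j) → i ≤ j ∧ j ≤ k)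

/-- The number of strict ancestors of `u` labelled by `~`. -/
def tildeCount (t : Label) (u : List ℕ) : ℕ :=
  (List.range u.length).countP (fun m => decide (t (u.take m) = some Sym.neg))

/-- A node is kept if it has an even number of `~`-labelled strict ancestors. -/
def kept (t : Label) (u : List ℕ) : Prop := tildeCount t u % 2 = 0

instance (t : Label) (u : List ℕ) : Decidable (kept t u) := by
  unfold kept; infer_instance

/-- The node of a branch `α` at depth `n`. -/
def pref (α : ℕ → ℕ) (n : ℕ) : List ℕ := (List.range n).map α

/-- `α` is an infinite branch of `t`. -/
def IsBranch (t : Label) (α : ℕ → ℕ) : Prop := ∀ n, t (pref α n) ≠ none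

/-- `t` is well-formed: no branch contains infinitely many `~`. -/
def WellFormed (t : Label) : Prop :=
  ∀ α : ℕ → ℕ, IsBranch t α → {n : ℕ | t (pref α n) = some Sym.neg}.Finite

/-- `t` is a well-formed tree over `A^~_{i,k}`. -/
def GoodTree (t : Label) (i k : ℕ) : Prop := IsTree t i k ∧ WellFormed t

/-- The effective priority of a node: the labelled priority, shifted by one at
switched nodes (each `~` swaps the players). -/
def effPri (t : Label) (u : List ℕ) : Option ℕ :=
  match t u with
  | some (Sym.pri j) => some (if kept t u then j else j + 1)
  | _ => none

/-- The player controlling a node: the player named by the choice symbol,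
swapped if the node is switched. -/
def ctrl (t : Label) (u : List ℕ) : Option Bool :=
  match t u with
  | some (Sym.choice Q) => some (if kept t u then Q else !Q)
  | _ => none

/-- The effective priority `j` appears infinitely often on the branch `α`. -/
def InfOften (t : Label) (α : ℕ → ℕ) (j : ℕ) : Prop :=
  {n : ℕ | effPri t (pref α n) = some j}.Infinite

/-- The branch `α` is winning for player `P` in the game `G(t)`: the least
effective priority occurring infinitely often has the parity favourable to `P`
(even for player 1 = `true`). -/
def WinsBranch (t : Label) (P : Bool) (α : ℕ → ℕ) : Prop :=
  ∃ j, InfOften t α j ∧ (∀ j' < j, ¬ InfOften t α j') ∧ (Even j ↔ P = true)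

/-- A strategy of player `P` in `G(t)`, identified (since the arena is a tree)
with a prefix-closed set of nodes: deterministic at `P`'s positions and full at
the other positions. -/
def IsStrategy (t : Label) (P : Bool) (S : List ℕ → Prop) : Prop :=
  S [] ∧
  (∀ u, S u → t u ≠ none) ∧
  (∀ u (d : ℕ), S (u ++ [d]) → S u) ∧
  (∀ u, S u → ctrl t u = some P → ∃! d : ℕ, S (u ++ [d])) ∧
  (∀ u (d : ℕ), S u → ctrl t u ≠ some P → t (u ++ [d]) ≠ none → S (u ++ [d]))

/-- An infinite play of `S`: a branch all of whose prefixes belong to `S`. -/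
def IsPlayOf (S : List ℕ → Prop) (α : ℕ → ℕ) : Prop := ∀ n, S (pref α n)

/-- A winning strategy of `P`: all its infinite plays are winning for `P`. -/
def IsWinningStrategy (t : Label) (P : Bool) (S : List ℕ → Prop) : Prop :=
  IsStrategy t P S ∧ ∀ α, IsPlayOf S α → WinsBranch t P α

/-- `j` is a `P`-losing priority: within `{i,…,k}` and of the parity
unfavourable to `P` (odd for player 1 = `true`). -/
def PLosing (i k : ℕ) (P : Bool) (j : ℕ) : Prop :=
  i ≤ j ∧ j ≤ k ∧ (Odd j ↔ P = true)

/-- `j` is a `P`-winning priority. -/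
def PWinning (i k : ℕ) (P : Bool) (j : ℕ) : Prop :=
  i ≤ j ∧ j ≤ k ∧ ¬ (Odd j ↔ P = true)

/-- A position `u` of the strategy `S` is active: it carries a `P`-losing
priority `j` and no strict ancestor is labelled `~` or by a smaller priority. -/
def Active (t : Label) (i k : ℕ) (P : Bool) (S : List ℕ → Prop) (u : List ℕ) : Prop :=
  S u ∧ ∃ j, t u = some (Sym.pri j) ∧ PLosing i k P j ∧
    ∀ w, w <+: u → w ≠ u →
      (t w ≠ some Sym.neg ∧ ∀ j', t w = some (Sym.pri j') → j ≤ j')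

/-- `w` is a `⪯`-minimal active position above `u` (an element of `suk_u(Σ)`). -/
def Suk (t : Label) (i k : ℕ) (P : Bool) (S : List ℕ → Prop) (u w : List ℕ) : Prop :=
  Active t i k P S w ∧ u <+: w ∧
    ∀ w', Active t i k P S w' → u <+: w' → w' <+: w → w' = w

/-- The relation `u ≫ w` associated with the strategy `S`. -/
def Gg (t : Label) (i k : ℕ) (P : Bool) (S : List ℕ → Prop) (u w : List ℕ) : Prop :=
  S u ∧ S w ∧ u <+: w ∧ u ≠ w ∧
    ∃ w', Active t i k P S w' ∧ u <+: w' ∧ w' <+: w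

/-- Lexicographic strict order on `P`-signatures (tuples of ordinals indexed by
the `P`-losing priorities; smaller indices are more significant). -/
def sigLt (i k : ℕ) (P : Bool) (σ τ : ℕ → Ordinal) : Prop :=
  ∃ j, PLosing i k P j ∧ σ j < τ j ∧
    ∀ j', PLosing i k P j' → j' < j → σ j' = τ j'

/-- Equality of `P`-signatures (on the relevant coordinates). -/
def sigEq (i k : ℕ) (P : Bool) (σ τ : ℕ → Ordinal) : Prop :=
  ∀ j, PLosing i k P j → σ j = τ j

/-- Lexicographic order on `P`-signatures. -/
def sigLe (i k : ℕ) (P : Bool) (σ τ : ℕ → Ordinal) : Prop :=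
  sigLt i k P σ τ ∨ sigEq i k P σ τ

/-- Lexicographic strict order on prefixes `σ↾ℓ` of `P`-signatures. -/
def sigLtBelow (i k : ℕ) (P : Bool) (ℓ : ℕ) (σ τ : ℕ → Ordinal) : Prop :=
  ∃ j, PLosing i k P j ∧ j ≤ ℓ ∧ σ j < τ j ∧
    ∀ j', PLosing i k P j' → j' < j → σ j' = τ j'

/-- Equality of the prefixes `σ↾ℓ`. -/
def sigEqBelow (i k : ℕ) (P : Bool) (ℓ : ℕ) (σ τ : ℕ → Ordinal) : Prop :=
  ∀ j, PLosing i k P j → j ≤ ℓ → σ j = τ j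

/-- Lexicographic order on the prefixes `σ↾ℓ`. -/
def sigLeBelow (i k : ℕ) (P : Bool) (ℓ : ℕ) (σ τ : ℕ → Ordinal) : Prop :=
  sigLtBelow i k P ℓ σ τ ∨ sigEqBelow i k P ℓ σ τ

/-- Order on signatures extended by `∞` (represented by `none`) as maximum. -/
def extLe (i k : ℕ) (P : Bool) : Option (ℕ → Ordinal) → Option (ℕ → Ordinal) → Prop
  | _, none => True
  | none, some _ => False
  | some σ, some τ => sigLe i k P σ τ

/-- Equality of signatures extended by `∞`. -/
def extEq (i k : ℕ) (P : Bool) : Option (ℕ → Ordinal) → Option (ℕ → Ordinal) → Prop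
  | none, none => True
  | some σ, some τ => sigEq i k P σ τ
  | _, _ => False

/-- Order on prefixes `σ↾ℓ` of signatures extended by `∞`. -/
def extLeBelow (i k : ℕ) (P : Bool) (ℓ : ℕ) :
    Option (ℕ → Ordinal) → Option (ℕ → Ordinal) → Prop
  | _, none => True
  | none, some _ => False
  | some σ, some τ => sigLeBelow i k P ℓ σ τ

/-- Strict order on prefixes `σ↾ℓ` of signatures extended by `∞`. -/
def extLtBelow (i k : ℕ) (P : Bool) (ℓ : ℕ) :
    Option (ℕ → Ordinal) → Option (ℕ → Ordinal) → Prop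
  | none, _ => False
  | some _, none => True
  | some σ, some τ => sigLtBelow i k P ℓ σ τ

/-- `s` is the signature assignment `s(·,Σ)` of the strategy `S`: at an active
node with priority `j`, the coordinate `j` of the child's value is incremented
by one and the later coordinates are zeroed; at a non-active node of `S`, the
value is the least upper bound (in the lexicographic order) of the values at
the `⪯`-minimal active descendants. -/
def SigDef (t : Label) (i k : ℕ) (P : Bool) (S : List ℕ → Prop)
    (s : List ℕ → ℕ → Ordinal) : Prop :=
  (∀ u j, Active t i k P S u → t u = some (Sym.pri j) →
    ∀ j', PLosing i k P j' →
      (j' < j → s u j' = s (u ++ [0]) j') ∧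
      (j' = j → s u j' = s (u ++ [0]) j + 1) ∧
      (j < j' → s u j' = 0)) ∧
  (∀ u, S u → ¬ Active t i k P S u →
    (∀ w, Suk t i k P S u w → sigLe i k P (s w) (s u)) ∧
    (∀ τ, (∀ w, Suk t i k P S u w → sigLe i k P (s w) τ) → sigLe i k P (s u) τ))

/-- The subtree of `t` rooted at `u`. -/
def subtree (t : Label) (u : List ℕ) : Label := fun w => t (u ++ w)

/-- The tree with a unary root symbol `s` and subtree `t`. -/
def node1 (s : Sym) (t : Label) : Label := fun u =>
  match u with
  | [] => some s
  | 0 :: w => t w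
  | _ => none

/-- The tree with root the binary choice symbol of player `b` and the given
left and right subtrees. -/
def node2 (b : Bool) (tL tR : Label) : Label := fun u =>
  match u with
  | [] => some (Sym.choice b)
  | 0 :: w => tL w
  | 1 :: w => tR w
  | _ => none

/-- `σ` is the value `s(ε,Σ)` of some winning strategy `Σ` of `P` in `G(t)`. -/
def ValOf (t : Label) (i k : ℕ) (P : Bool) (σ : ℕ → Ordinal) : Prop :=
  ∃ (S : List ℕ → Prop) (s : List ℕ → ℕ → Ordinal),
    IsWinningStrategy t P S ∧ SigDef t i k P S s ∧ sigEq i k P σ (s [])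

/-- `σ` is the signature `σ_P(t)`: the lexicographic infimum (= minimum) of the
values of the winning strategies of `P` in `G(t)`. -/
def IsSigOf (t : Label) (i k : ℕ) (P : Bool) (σ : ℕ → Ordinal) : Prop :=
  ValOf t i k P σ ∧ ∀ τ, ValOf t i k P τ → sigLe i k P σ τ

/-- `a` is the extended signature `σ_P(t)`, with `none` representing `∞`
(no winning strategy of `P` exists). -/
def IsExtSigOf (t : Label) (i k : ℕ) (P : Bool) : Option (ℕ → Ordinal) → Prop
  | none => ¬ ∃ S : List ℕ → Prop, IsWinningStrategy t P S
  | some σ => IsSigOf t i k P σ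

/-- The six invariants of the signature lemma for a pair of assignments
`σ' : Bool → Label → Option (ℕ → Ordinal)` (with `none` playing the role of
`∞`): (1) `σ'_P(t) = ∞` iff `P` loses `G(t)`; (2) `σ'_P(~(t)) = (0,…,0)` if `P`
wins `G(~(t))`; (3) prepending a `P`-winning priority `j` keeps the coordinates
below `j` and zeroes the ones `≥ j`; (4) prepending a `P`-losing priority `j`
increments coordinate `j` and zeroes the later ones; (5) the min rule at `P`'s
choice nodes; (6) the max rule at the opponent's choice nodes. -/
def SigInvariants (i k : ℕ) (σ' : Bool → Label → Option (ℕ → Ordinal)) : Prop :=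
  (∀ (P : Bool) (t : Label), GoodTree t i k →
    (σ' P t = none ↔ ¬ ∃ S : List ℕ → Prop, IsWinningStrategy t P S)) ∧
  (∀ (P : Bool) (t : Label), GoodTree t i k →
    (∃ S : List ℕ → Prop, IsWinningStrategy (node1 Sym.neg t) P S) →
    ∃ τ, σ' P (node1 Sym.neg t) = some τ ∧ ∀ j, PLosing i k P j → τ j = 0) ∧
  (∀ (P : Bool) (t : Label) (j : ℕ) (τ : ℕ → Ordinal), GoodTree t i k →
    PWinning i k P j → σ' P t = some τ →
    ∃ τ', σ' P (node1 (Sym.pri j) t) = some τ' ∧ ∀ j', PLosing i k P j' →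
      (j' < j → τ' j' = τ j') ∧ (j ≤ j' → τ' j' = 0)) ∧
  (∀ (P : Bool) (t : Label) (j : ℕ) (τ : ℕ → Ordinal), GoodTree t i k →
    PLosing i k P j → σ' P t = some τ →
    ∃ τ', σ' P (node1 (Sym.pri j) t) = some τ' ∧ ∀ j', PLosing i k P j' →
      (j' < j → τ' j' = τ j') ∧ (j' = j → τ' j' = τ j + 1) ∧ (j < j' → τ' j' = 0)) ∧
  (∀ (P : Bool) (tL tR : Label), GoodTree tL i k → GoodTree tR i k →
    (extLe i k P (σ' P tL) (σ' P tR) →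
      extEq i k P (σ' P (node2 P tL tR)) (σ' P tL)) ∧
    (extLe i k P (σ' P tR) (σ' P tL) →
      extEq i k P (σ' P (node2 P tL tR)) (σ' P tR))) ∧
  (∀ (P : Bool) (tL tR : Label), GoodTree tL i k → GoodTree tR i k →
    (extLe i k P (σ' P tL) (σ' P tR) →
      extEq i k P (σ' P (node2 (!P) tL tR)) (σ' P tR)) ∧
    (extLe i k P (σ' P tR) (σ' P tL) →
      extEq i k P (σ' P (node2 (!P) tL tR)) (σ' P tL)))

/-- `S` is a `σ'`-optimal strategy of `P` in `G(t)`: at each position controlled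
by `P` it moves to a subtree of lexicographically minimal `σ'`-value for the
appropriate player (depending on whether the position is kept or switched). -/
def IsOptimal (t : Label) (i k : ℕ) (P : Bool)
    (σ' : Bool → Label → Option (ℕ → Ordinal)) (S : List ℕ → Prop) : Prop :=
  IsStrategy t P S ∧
  ∀ u (d : ℕ), S u → ctrl t u = some P → S (u ++ [d]) →
    ∀ d' : ℕ, t (u ++ [d']) ≠ none →
      extLe i k (if kept t u then P else !P)
        (σ' (if kept t u then P else !P) (subtree t (u ++ [d])))
        (σ' (if kept t u then P else !P) (subtree t (u ++ [d'])))

/-- A partial strategy of `P`: a `P`-deterministic behaviour (nonempty,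
prefix-closed, without maximal elements, deterministic at `P`'s positions). -/
def IsPartialStrategy (t : Label) (P : Bool) (S : List ℕ → Prop) : Prop :=
  S [] ∧
  (∀ u, S u → t u ≠ none) ∧
  (∀ u (d : ℕ), S (u ++ [d]) → S u) ∧
  (∀ u, S u → ctrl t u = some P → ∃! d : ℕ, S (u ++ [d])) ∧
  (∀ u, S u → ∃ d : ℕ, S (u ++ [d]))

/-- The position `u` is not reachable by the partial strategy `S` of `P`: it is
a child, outside `S`, of an opponent position of `S`. -/
def NotReachable (t : Label) (P : Bool) (S : List ℕ → Prop) (u : List ℕ) : Prop :=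
  ∃ (w : List ℕ) (d : ℕ), u = w ++ [d] ∧ S w ∧ ¬ S u ∧ t u ≠ none ∧ ctrl t w = some (!P)

section SigOrder

open Classical

variable {i k : ℕ} {P : Bool}

lemma sigEq_refl (σ : ℕ → Ordinal) : sigEq i k P σ σ := fun _ _ => rfl

lemma sigEq_symm {σ τ} (h : sigEq i k P σ τ) : sigEq i k P τ σ :=
  fun j hj => (h j hj).symm

lemma sigEq_trans {σ τ ρ} (h1 : sigEq i k P σ τ) (h2 : sigEq i k P τ ρ) :
    sigEq i k P σ ρ := fun j hj => (h1 j hj).trans (h2 j hj)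

lemma sigLe_refl (σ : ℕ → Ordinal) : sigLe i k P σ σ := Or.inr (sigEq_refl σ)

lemma exists_min_diff {σ τ} (h : ¬ sigEq i k P σ τ) :
    ∃ j, PLosing i k P j ∧ σ j ≠ τ j ∧ ∀ j', PLosing i k P j' → j' < j → σ j' = τ j' := by
  have hne : ∃ j, PLosing i k P j ∧ σ j ≠ τ j := by
    by_contra hc; push_neg at hc
    exact h fun j hj => hc j hj
  classical
  obtain ⟨j0, hj0⟩ := hne
  obtain ⟨j1, hj1, hmin⟩ := Nat.lt_wfRel.wf.has_min {j | PLosing i k P j ∧ σ j ≠ τ j} ⟨j0, hj0⟩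
  refine ⟨j1, hj1.1, hj1.2, fun j' hj' hlt => ?_⟩
  by_contra hne'
  exact hmin j' ⟨hj', hne'⟩ hlt

lemma sig_trichotomy (σ τ : ℕ → Ordinal) :
    sigEq i k P σ τ ∨ sigLt i k P σ τ ∨ sigLt i k P τ σ := by
  by_cases h : sigEq i k P σ τ
  · exact Or.inl h
  · obtain ⟨j1, hPL, hne, hbel⟩ := exists_min_diff h
    rcases lt_or_gt_of_ne hne with hlt | hgt
    · exact Or.inr (Or.inl ⟨j1, hPL, hlt, hbel⟩)
    · exact Or.inr (Or.inr ⟨j1, hPL, hgt, fun j' h1 h2 => (hbel j' h1 h2).symm⟩)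

lemma sigLt_asymm {σ τ} (h1 : sigLt i k P σ τ) (h2 : sigLt i k P τ σ) : False := by
  obtain ⟨j1, hPL1, hlt1, hb1⟩ := h1
  obtain ⟨j2, hPL2, hlt2, hb2⟩ := h2
  rcases lt_trichotomy j1 j2 with h | h | h
  · exact absurd (hb2 j1 hPL1 h).symm (ne_of_lt hlt1)
  · subst h; exact absurd hlt2 (not_lt_of_gt hlt1)
  · exact (ne_of_lt hlt2) (hb1 j2 hPL2 h).symm

lemma sigLt_ne {σ τ} (h1 : sigLt i k P σ τ) (h2 : sigEq i k P σ τ) : False := by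
  obtain ⟨j1, hPL1, hlt1, _⟩ := h1
  exact absurd (h2 j1 hPL1) (ne_of_lt hlt1)

lemma sigLt_of_not_le {σ τ} (h : ¬ sigLe i k P σ τ) : sigLt i k P τ σ := by
  rcases sig_trichotomy σ τ with h1 | h1 | h1
  · exact absurd (Or.inr h1) h
  · exact absurd (Or.inl h1) h
  · exact h1

lemma not_le_of_sigLt {σ τ} (h : sigLt i k P τ σ) : ¬ sigLe i k P σ τ := by
  rintro (h1 | h1)
  · exact sigLt_asymm h1 h
  · exact sigLt_ne h (sigEq_symm h1)

lemma sigLt_trans {σ τ ρ} (h1 : sigLt i k P σ τ) (h2 : sigLt i k P τ ρ) :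
    sigLt i k P σ ρ := by
  obtain ⟨j1, hPL1, hlt1, hb1⟩ := h1
  obtain ⟨j2, hPL2, hlt2, hb2⟩ := h2
  rcases lt_trichotomy j1 j2 with h | h | h
  · exact ⟨j1, hPL1, lt_of_lt_of_le hlt1 (le_of_eq (hb2 j1 hPL1 h)),
      fun j' hj' hl => (hb1 j' hj' hl).trans (hb2 j' hj' (hl.trans h))⟩
  · subst h; exact ⟨j1, hPL1, hlt1.trans hlt2,
      fun j' hj' hl => (hb1 j' hj' hl).trans (hb2 j' hj' hl)⟩
  · exact ⟨j2, hPL2, lt_of_le_of_lt (le_of_eq (hb1 j2 hPL2 h)) hlt2,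
      fun j' hj' hl => (hb1 j' hj' (hl.trans h)).trans (hb2 j' hj' hl)⟩

lemma sigLt_of_lt_of_eq {σ τ ρ} (h1 : sigLt i k P σ τ) (h2 : sigEq i k P τ ρ) :
    sigLt i k P σ ρ := by
  obtain ⟨j1, hPL1, hlt1, hb1⟩ := h1
  exact ⟨j1, hPL1, hlt1.trans_le (le_of_eq (h2 j1 hPL1)),
    fun j' hj' hl => (hb1 j' hj' hl).trans (h2 j' hj')⟩

lemma sigLt_of_eq_of_lt {σ τ ρ} (h1 : sigEq i k P σ τ) (h2 : sigLt i k P τ ρ) :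
    sigLt i k P σ ρ := by
  obtain ⟨j2, hPL2, hlt2, hb2⟩ := h2
  exact ⟨j2, hPL2, (le_of_eq (h1 j2 hPL2)).trans_lt hlt2,
    fun j' hj' hl => (h1 j' hj').trans (hb2 j' hj' hl)⟩

lemma sigLe_trans {σ τ ρ} (h1 : sigLe i k P σ τ) (h2 : sigLe i k P τ ρ) :
    sigLe i k P σ ρ := by
  rcases h1 with h1 | h1 <;> rcases h2 with h2 | h2
  · exact Or.inl (sigLt_trans h1 h2)
  · exact Or.inl (sigLt_of_lt_of_eq h1 h2)
  · exact Or.inl (sigLt_of_eq_of_lt h1 h2)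
  · exact Or.inr (sigEq_trans h1 h2)

lemma sigLe_of_le_of_eq {σ τ ρ} (h1 : sigLe i k P σ τ) (h2 : sigEq i k P τ ρ) :
    sigLe i k P σ ρ := sigLe_trans h1 (Or.inr h2)

/- Below versions -/

lemma sigEqBelow_refl (ℓ : ℕ) (σ : ℕ → Ordinal) : sigEqBelow i k P ℓ σ σ :=
  fun _ _ _ => rfl

lemma sigEqBelow_symm {ℓ σ τ} (h : sigEqBelow i k P ℓ σ τ) : sigEqBelow i k P ℓ τ σ :=
  fun j hj hl => (h j hj hl).symm

lemma sigEqBelow_trans {ℓ σ τ ρ} (h1 : sigEqBelow i k P ℓ σ τ)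
    (h2 : sigEqBelow i k P ℓ τ ρ) : sigEqBelow i k P ℓ σ ρ :=
  fun j hj hl => (h1 j hj hl).trans (h2 j hj hl)

lemma sigLeBelow_refl (ℓ : ℕ) (σ : ℕ → Ordinal) : sigLeBelow i k P ℓ σ σ :=
  Or.inr (sigEqBelow_refl ℓ σ)

lemma exists_min_diffB {ℓ σ τ} (h : ¬ sigEqBelow i k P ℓ σ τ) :
    ∃ j, PLosing i k P j ∧ j ≤ ℓ ∧ σ j ≠ τ j ∧
      ∀ j', PLosing i k P j' → j' < j → σ j' = τ j' := by
  have hne : ∃ j, (PLosing i k P j ∧ j ≤ ℓ) ∧ σ j ≠ τ j := by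
    by_contra hc; push_neg at hc
    exact h fun j hj hl => hc j ⟨hj, hl⟩
  obtain ⟨j0, hj0⟩ := hne
  obtain ⟨j1, hj1, hmin⟩ := Nat.lt_wfRel.wf.has_min
    {j | (PLosing i k P j ∧ j ≤ ℓ) ∧ σ j ≠ τ j} ⟨j0, hj0⟩
  refine ⟨j1, hj1.1.1, hj1.1.2, hj1.2, fun j' hj' hlt => ?_⟩
  by_contra hne'
  exact hmin j' ⟨⟨hj', hlt.le.trans hj1.1.2⟩, hne'⟩ hlt

lemma sigB_trichotomy (ℓ : ℕ) (σ τ : ℕ → Ordinal) :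
    sigEqBelow i k P ℓ σ τ ∨ sigLtBelow i k P ℓ σ τ ∨ sigLtBelow i k P ℓ τ σ := by
  by_cases h : sigEqBelow i k P ℓ σ τ
  · exact Or.inl h
  · obtain ⟨j1, hPL, hle, hne, hbel⟩ := exists_min_diffB h
    rcases lt_or_gt_of_ne hne with hlt | hgt
    · exact Or.inr (Or.inl ⟨j1, hPL, hle, hlt, hbel⟩)
    · exact Or.inr (Or.inr ⟨j1, hPL, hle, hgt, fun j' h1 h2 => (hbel j' h1 h2).symm⟩)

lemma sigLtB_asymm {ℓ σ τ} (h1 : sigLtBelow i k P ℓ σ τ)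
    (h2 : sigLtBelow i k P ℓ τ σ) : False := by
  obtain ⟨j1, hPL1, _, hlt1, hb1⟩ := h1
  obtain ⟨j2, hPL2, _, hlt2, hb2⟩ := h2
  rcases lt_trichotomy j1 j2 with h | h | h
  · exact absurd (hb2 j1 hPL1 h).symm (ne_of_lt hlt1)
  · subst h; exact absurd hlt2 (not_lt_of_gt hlt1)
  · exact (ne_of_lt hlt2) (hb1 j2 hPL2 h).symm

lemma sigLtB_ne {ℓ σ τ} (h1 : sigLtBelow i k P ℓ σ τ) (h2 : sigEqBelow i k P ℓ σ τ) :
    False := by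
  obtain ⟨j1, hPL1, hle1, hlt1, _⟩ := h1
  exact absurd (h2 j1 hPL1 hle1) (ne_of_lt hlt1)

lemma sigLeB_antisymm {ℓ σ τ} (h1 : sigLeBelow i k P ℓ σ τ)
    (h2 : sigLeBelow i k P ℓ τ σ) : sigEqBelow i k P ℓ σ τ := by
  rcases h1 with h1 | h1
  · rcases h2 with h2 | h2
    · exact absurd h2 fun h => sigLtB_asymm h1 h
    · exact absurd (sigEqBelow_symm h2) fun h => sigLtB_ne h1 h
  · exact h1

lemma sigLtB_of_lt_of_eq {ℓ σ τ ρ} (h1 : sigLtBelow i k P ℓ σ τ)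
    (h2 : sigEqBelow i k P ℓ τ ρ) : sigLtBelow i k P ℓ σ ρ := by
  obtain ⟨j1, hPL1, hle1, hlt1, hb1⟩ := h1
  exact ⟨j1, hPL1, hle1, hlt1.trans_le (le_of_eq (h2 j1 hPL1 hle1)),
    fun j' hj' hl => (hb1 j' hj' hl).trans (h2 j' hj' (hl.le.trans hle1))⟩

lemma sigLtB_of_eq_of_lt {ℓ σ τ ρ} (h1 : sigEqBelow i k P ℓ σ τ)
    (h2 : sigLtBelow i k P ℓ τ ρ) : sigLtBelow i k P ℓ σ ρ := by
  obtain ⟨j2, hPL2, hle2, hlt2, hb2⟩ := h2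
  exact ⟨j2, hPL2, hle2, (le_of_eq (h1 j2 hPL2 hle2)).trans_lt hlt2,
    fun j' hj' hl => (h1 j' hj' (hl.le.trans hle2)).trans (hb2 j' hj' hl)⟩

lemma sigLtB_trans {ℓ σ τ ρ} (h1 : sigLtBelow i k P ℓ σ τ)
    (h2 : sigLtBelow i k P ℓ τ ρ) : sigLtBelow i k P ℓ σ ρ := by
  obtain ⟨j1, hPL1, hle1, hlt1, hb1⟩ := h1
  obtain ⟨j2, hPL2, hle2, hlt2, hb2⟩ := h2
  rcases lt_trichotomy j1 j2 with h | h | h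
  · exact ⟨j1, hPL1, hle1, hlt1.trans_le (le_of_eq (hb2 j1 hPL1 h)),
      fun j' hj' hl => (hb1 j' hj' hl).trans (hb2 j' hj' (hl.trans h))⟩
  · subst h; exact ⟨j1, hPL1, hle1, hlt1.trans hlt2,
      fun j' hj' hl => (hb1 j' hj' hl).trans (hb2 j' hj' hl)⟩
  · exact ⟨j2, hPL2, hle2, (le_of_eq (hb1 j2 hPL2 h)).trans_lt hlt2,
      fun j' hj' hl => (hb1 j' hj' (hl.trans h)).trans (hb2 j' hj' hl)⟩

lemma sigLeB_trans {ℓ σ τ ρ} (h1 : sigLeBelow i k P ℓ σ τ)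
    (h2 : sigLeBelow i k P ℓ τ ρ) : sigLeBelow i k P ℓ σ ρ := by
  rcases h1 with h1 | h1 <;> rcases h2 with h2 | h2
  · exact Or.inl (sigLtB_trans h1 h2)
  · exact Or.inl (sigLtB_of_lt_of_eq h1 h2)
  · exact Or.inl (sigLtB_of_eq_of_lt h1 h2)
  · exact Or.inr (sigEqBelow_trans h1 h2)

lemma sigLe_toBelow {ℓ σ τ} (h : sigLe i k P σ τ) : sigLeBelow i k P ℓ σ τ := by
  rcases h with h | h
  · obtain ⟨j1, hPL1, hlt1, hb1⟩ := h
    rcases le_or_gt j1 ℓ with hle | hgt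
    · exact Or.inl ⟨j1, hPL1, hle, hlt1, hb1⟩
    · exact Or.inr fun j' hj' hl => hb1 j' hj' (lt_of_le_of_lt hl hgt)
  · exact Or.inr fun j' hj' _ => h j' hj'

lemma sigEq_toBelow {ℓ σ τ} (h : sigEq i k P σ τ) : sigEqBelow i k P ℓ σ τ :=
  fun j' hj' _ => h j' hj'

/-- Lifting a `Below`-comparison through the "increment at `jm`, zero above" rule. -/
lemma sig_rule_mono {ℓ jm : ℕ} (hjm : jm ≤ ℓ) {σ τ σ' τ' : ℕ → Ordinal}
    (hσ' : ∀ j', PLosing i k P j' →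
      (j' < jm → σ' j' = σ j') ∧ (j' = jm → σ' j' = σ jm + 1) ∧ (jm < j' → σ' j' = 0))
    (hτ' : ∀ j', PLosing i k P j' →
      (j' < jm → τ' j' = τ j') ∧ (j' = jm → τ' j' = τ jm + 1) ∧ (jm < j' → τ' j' = 0))
    (h : sigLeBelow i k P ℓ σ τ) : sigLe i k P σ' τ' := by
  rcases h with h | h
  · obtain ⟨j0, hPL0, hle0, hlt0, hb0⟩ := h
    rcases lt_trichotomy j0 jm with hc | hc | hc
    · refine Or.inl ⟨j0, hPL0, ?_, fun j' hj' hl => ?_⟩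
      · rw [(hσ' j0 hPL0).1 hc, (hτ' j0 hPL0).1 hc]; exact hlt0
      · have hl' : j' < jm := hl.trans hc
        rw [(hσ' j' hj').1 hl', (hτ' j' hj').1 hl']
        exact hb0 j' hj' hl
    · subst hc
      refine Or.inl ⟨j0, hPL0, ?_, fun j' hj' hl => ?_⟩
      · rw [(hσ' j0 hPL0).2.1 rfl, (hτ' j0 hPL0).2.1 rfl]
        rw [Ordinal.add_one_eq_succ, Ordinal.add_one_eq_succ]
        exact Order.succ_lt_succ hlt0
      · rw [(hσ' j' hj').1 hl, (hτ' j' hj').1 hl]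
        exact hb0 j' hj' hl
    · refine Or.inr fun j' hj' => ?_
      rcases lt_trichotomy j' jm with hd | hd | hd
      · rw [(hσ' j' hj').1 hd, (hτ' j' hj').1 hd]
        exact hb0 j' hj' (hd.trans hc)
      · subst hd
        rw [(hσ' j' hj').2.1 rfl, (hτ' j' hj').2.1 rfl, hb0 j' hj' hc]
      · rw [(hσ' j' hj').2.2 hd, (hτ' j' hj').2.2 hd]
  · refine Or.inr fun j' hj' => ?_
    rcases lt_trichotomy j' jm with hd | hd | hd
    · rw [(hσ' j' hj').1 hd, (hτ' j' hj').1 hd]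
      exact h j' hj' ((hd.trans_le hjm).le)
    · subst hd
      rw [(hσ' j' hj').2.1 rfl, (hτ' j' hj').2.1 rfl, h j' hj' hjm]
    · rw [(hσ' j' hj').2.2 hd, (hτ' j' hj').2.2 hd]

lemma sig_rule_congr {ℓ jm : ℕ} (hjm : jm ≤ ℓ) {σ τ σ' τ' : ℕ → Ordinal}
    (hσ' : ∀ j', PLosing i k P j' →
      (j' < jm → σ' j' = σ j') ∧ (j' = jm → σ' j' = σ jm + 1) ∧ (jm < j' → σ' j' = 0))
    (hτ' : ∀ j', PLosing i k P j' →
      (j' < jm → τ' j' = τ j') ∧ (j' = jm → τ' j' = τ jm + 1) ∧ (jm < j' → τ' j' = 0))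
    (h : sigEqBelow i k P ℓ σ τ) : sigEq i k P σ' τ' := by
  have := sig_rule_mono hjm hσ' hτ' (Or.inr h)
  have := sig_rule_mono hjm hτ' hσ' (Or.inr (sigEqBelow_symm h))
  rcases ‹sigLe i k P σ' τ'› with h1 | h1
  · rcases ‹sigLe i k P τ' σ'› with h2 | h2
    · exact absurd h2 fun hh => sigLt_asymm h1 hh
    · exact absurd (sigEq_symm h2) fun hh => sigLt_ne h1 hh
  · exact h1

end SigOrder
section LexSup

open Classical

/-- Ordinal `sSup` of a countable-indexed set is well-defined. -/
lemma bddAbove_ord_countable (s : Set Ordinal) (h : s.Countable) : BddAbove s := by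
  have := h.to_subtype
  have : Small.{0} s := Countable.toSmall _
  exact Ordinal.bddAbove_of_small

variable (i k : ℕ) (P : Bool)

/-- Lexicographic supremum of the family `f` over the index set `D`. -/
noncomputable def lexSup (f : List ℕ → ℕ → Ordinal) (D : Set (List ℕ)) : ℕ → Ordinal :=
  WellFounded.fix Nat.lt_wfRel.wf fun j ih =>
    sSup {o | ∃ w ∈ D, o = f w j ∧
      ∀ j', ∀ h : j' < j, PLosing i k P j' → f w j' = ih j' h}

variable {i k P}

lemma lexSup_eq (f : List ℕ → ℕ → Ordinal) (D : Set (List ℕ)) (j : ℕ) :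
    lexSup i k P f D j = sSup {o | ∃ w ∈ D, o = f w j ∧
      ∀ j' < j, PLosing i k P j' → f w j' = lexSup i k P f D j'} := by
  rw [lexSup, WellFounded.fix_eq]

lemma lexSup_stage_bdd (f : List ℕ → ℕ → Ordinal) (D : Set (List ℕ)) (j : ℕ)
    (X : ℕ → Ordinal) :
    BddAbove {o | ∃ w ∈ D, o = f w j ∧ ∀ j' < j, PLosing i k P j' → f w j' = X j'} := by
  apply bddAbove_ord_countable
  have : {o | ∃ w ∈ D, o = f w j ∧ ∀ j' < j, PLosing i k P j' → f w j' = X j'} ⊆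
      (fun w => f w j) '' D := by
    rintro o ⟨w, hw, rfl, -⟩; exact ⟨w, hw, rfl⟩
  exact Set.Countable.mono this ((Set.to_countable D).image _)

/-- The lexicographic supremum is an upper bound. -/
lemma lexSup_ub {f : List ℕ → ℕ → Ordinal} {D : Set (List ℕ)} {w : List ℕ}
    (hw : w ∈ D) : sigLe i k P (f w) (lexSup i k P f D) := by
  by_cases h : sigEq i k P (f w) (lexSup i k P f D)
  · exact Or.inr h
  · obtain ⟨j0, hPL, hne, hbel⟩ := exists_min_diff h
    left
    refine ⟨j0, hPL, ?_, hbel⟩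
    have hmem : f w j0 ∈ {o | ∃ w' ∈ D, o = f w' j0 ∧
        ∀ j' < j0, PLosing i k P j' → f w' j' = lexSup i k P f D j'} :=
      ⟨w, hw, rfl, fun j' hlt hj' => hbel j' hj' hlt⟩
    have hle : f w j0 ≤ lexSup i k P f D j0 := by
      rw [lexSup_eq]
      exact le_csSup (lexSup_stage_bdd f D j0 _) hmem
    exact lt_of_le_of_ne hle hne

/-- The lexicographic supremum is the least upper bound. -/
lemma lexSup_least {f : List ℕ → ℕ → Ordinal} {D : Set (List ℕ)} {τ : ℕ → Ordinal}
    (hub : ∀ w ∈ D, sigLe i k P (f w) τ) : sigLe i k P (lexSup i k P f D) τ := by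
  by_cases h : sigEq i k P (lexSup i k P f D) τ
  · exact Or.inr h
  · obtain ⟨j0, hPL, hne, hbel⟩ := exists_min_diff h
    rcases lt_or_gt_of_ne hne with hlt | hgt
    · exact Or.inl ⟨j0, hPL, hlt, hbel⟩
    · exfalso
      -- sSup at stage j0 exceeds τ j0, so some member exceeds τ j0
      have hnle : ¬ (lexSup i k P f D j0 ≤ τ j0) := not_le_of_gt hgt
      rw [lexSup_eq] at hnle
      have : ∃ o ∈ {o | ∃ w ∈ D, o = f w j0 ∧
          ∀ j' < j0, PLosing i k P j' → f w j' = lexSup i k P f D j'}, ¬ o ≤ τ j0 := by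
        by_contra hc; push_neg at hc
        rcases Set.eq_empty_or_nonempty {o | ∃ w ∈ D, o = f w j0 ∧
            ∀ j' < j0, PLosing i k P j' → f w j' = lexSup i k P f D j'} with he | hne'
        · rw [he, csSup_empty] at hnle
          exact hnle bot_le
        · exact hnle (csSup_le hne' hc)
      obtain ⟨o, ⟨w, hw, rfl, hag⟩, hgt'⟩ := this
      push_neg at hgt'
      have : sigLt i k P τ (f w) := by
        refine ⟨j0, hPL, hgt', fun j' hj' hl => ?_⟩
        exact (hbel j' hj' hl).symm.trans (hag j' hl hj').symm
      exact not_le_of_sigLt this (hub w hw)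

/-- If every member agrees with `η` on the `P`-losing coordinates `≤ ℓ` and `D`
is nonempty, then so does the lexicographic supremum. -/
lemma lexSup_prefix {f : List ℕ → ℕ → Ordinal} {D : Set (List ℕ)} {η : ℕ → Ordinal}
    {ℓ : ℕ} (hne : D.Nonempty)
    (hag : ∀ w ∈ D, ∀ j', PLosing i k P j' → j' ≤ ℓ → f w j' = η j') :
    ∀ j', PLosing i k P j' → j' ≤ ℓ → lexSup i k P f D j' = η j' := by
  intro j' hj' hl
  induction j' using Nat.strong_induction_on with
  | _ j' ih =>
  have hset : {o | ∃ w ∈ D, o = f w j' ∧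
      ∀ j'' < j', PLosing i k P j'' → f w j'' = lexSup i k P f D j''} = {η j'} := by
    ext o
    constructor
    · rintro ⟨w, hw, rfl, -⟩
      simp [hag w hw j' hj' hl]
    · rintro rfl
      obtain ⟨w, hw⟩ := hne
      refine ⟨w, hw, (hag w hw j' hj' hl).symm, fun j'' hlt hj'' => ?_⟩
      rw [hag w hw j'' hj'' (hlt.le.trans hl), ih j'' hlt hj'' (hlt.le.trans hl)]
  rw [lexSup_eq, hset, csSup_singleton]

end LexSup
section Structural

variable {t : Label} {i k : ℕ} {P : Bool} {S : List ℕ → Prop}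

lemma prefix_comparable {u v w : List ℕ} (h1 : u <+: w) (h2 : v <+: w) :
    u <+: v ∨ v <+: u := by
  rcases le_total u.length v.length with h | h
  · exact Or.inl (List.prefix_of_prefix_length_le h1 h2 h)
  · exact Or.inr (List.prefix_of_prefix_length_le h2 h1 h)

lemma prefix_length_lt {u v : List ℕ} (h : u <+: v) (hne : u ≠ v) :
    u.length < v.length := by
  rcases lt_or_eq_of_le h.length_le with h1 | h1
  · exact h1
  · exact absurd (List.IsPrefix.eq_of_length h h1) hne

lemma strategy_closed (hS : IsStrategy t P S) :
    ∀ l u, S (u ++ l) → S u := by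
  intro l
  induction l using List.reverseRecOn with
  | nil => intro u h; simpa using h
  | append_singleton l d ih =>
    intro u h
    rw [← List.append_assoc] at h
    exact ih u (hS.2.2.1 (u ++ l) d h)

lemma strategy_closed' (hS : IsStrategy t P S) {u v : List ℕ} (hv : S v)
    (h : u <+: v) : S u := by
  obtain ⟨l, rfl⟩ := h
  exact strategy_closed hS l u hv

lemma active_child_mem (ht : IsTree t i k) (hS : IsStrategy t P S) {u : List ℕ}
    (hA : Active t i k P S u) : S (u ++ [0]) := by
  obtain ⟨j0, hpri, -, -⟩ := hA.2
  have hctrl : ctrl t u = none := by unfold ctrl; rw [hpri]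
  have hne : t (u ++ [0]) ≠ none := by
    rw [ht.2.1 u _ hpri 0]
    simp [Sym.arity]
  exact hS.2.2.2.2 u 0 hA.1 (by rw [hctrl]; simp) hne

lemma gg_child (ht : IsTree t i k) (hS : IsStrategy t P S) {u : List ℕ}
    (hA : Active t i k P S u) : Gg t i k P S u (u ++ [0]) := by
  refine ⟨hA.1, active_child_mem ht hS hA, ⟨[0], rfl⟩, ?_, u, hA, List.prefix_refl u,
    ⟨[0], rfl⟩⟩
  intro h
  have := congrArg List.length h
  simp at this

lemma suk_gg {u w : List ℕ} (hSu : S u) (hnA : ¬ Active t i k P S u)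
    (hw : Suk t i k P S u w) : Gg t i k P S u w := by
  refine ⟨hSu, hw.1.1, hw.2.1, ?_, w, hw.1, hw.2.1, List.prefix_refl w⟩
  rintro rfl
  exact hnA hw.1

lemma suk_subset {x : List ℕ} (hnA : ¬ Active t i k P S x) {d : ℕ} {w' : List ℕ}
    (hw : Suk t i k P S (x ++ [d]) w') : Suk t i k P S x w' := by
  obtain ⟨hAct, hpre, hmin⟩ := hw
  have hx : x <+: x ++ [d] := ⟨[d], rfl⟩
  refine ⟨hAct, hx.trans hpre, ?_⟩
  intro z hAz hxz hzw
  rcases prefix_comparable hzw hpre with hz | hz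
  · -- z <+: x ++ [d]
    have hlen : z.length ≤ x.length + 1 := by
      have := hz.length_le; simpa using this
    rcases lt_or_eq_of_le hlen with h1 | h1
    · have hlz : z.length ≤ x.length := Nat.lt_succ_iff.mp h1
      have hz2 : z <+: x := List.prefix_of_prefix_length_le hz hx hlz
      have hzx : z = x := List.IsPrefix.eq_of_length hz2 (le_antisymm hlz hxz.length_le)
      exact absurd (hzx ▸ hAz) hnA
    · have hzx : z = x ++ [d] := List.IsPrefix.eq_of_length hz (by simpa using h1)
      have hpz : x ++ [d] <+: z := by rw [hzx]
      exact hmin z hAz hpz hzw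
  · exact hmin z hAz hz hzw

end Structural
section Branch

variable {t : Label} {i k : ℕ} {P : Bool} {S : List ℕ → Prop}

lemma pref_length (α : ℕ → ℕ) (n : ℕ) : (pref α n).length = n := by simp [pref]

lemma pref_take (α : ℕ → ℕ) {m n : ℕ} (h : m ≤ n) : (pref α n).take m = pref α m := by
  simp [pref, ← List.map_take, List.take_range, Nat.min_eq_left h]

lemma pref_prefix (α : ℕ → ℕ) {m n : ℕ} (h : m ≤ n) : pref α m <+: pref α n := by
  rw [← pref_take α h]; exact List.take_prefix _ _

lemma pref_getElem (α : ℕ → ℕ) {m p : ℕ} (h : p < m) :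
    (pref α m)[p]'(by rw [pref_length]; exact h) = α p := by
  simp [pref]

lemma effPri_of_kept {u : List ℕ} (hk : kept t u) {q : ℕ}
    (h : t u = some (Sym.pri q)) : effPri t u = some q := by
  unfold effPri; rw [h]; simp [hk]

lemma pri_of_effPri {u : List ℕ} {q : ℕ} (h : effPri t u = some q) :
    ∃ q', t u = some (Sym.pri q') ∧ (kept t u → q' = q) := by
  unfold effPri at h
  rcases hu : t u with _ | s
  · rw [hu] at h; simp at h
  · rcases s with q' | b | _ <;> rw [hu] at h <;> simp at h
    · exact ⟨q', rfl, fun hk => by simpa [if_pos hk] using h⟩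

theorem gg_wf (ht : IsTree t i k) (hSW : IsWinningStrategy t P S) :
    WellFounded (fun w u => Gg t i k P S u w) := by
  set r : List ℕ → List ℕ → Prop := fun w u => Gg t i k P S u w with hr
  by_contra hwf
  have hex : ∃ a, ¬ Acc r a := by
    by_contra hc; push_neg at hc; exact hwf ⟨hc⟩
  have step : ∀ a, ¬ Acc r a → ∃ b, r b a ∧ ¬ Acc r b := by
    intro a ha
    by_contra hc; push_neg at hc
    exact ha (Acc.intro a fun b hb => hc b hb)
  obtain ⟨a0, ha0⟩ := hex
  choose g hg1 hg2 using step
  let F : ℕ → {x : List ℕ // ¬ Acc r x} :=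
    fun n => Nat.rec ⟨a0, ha0⟩ (fun _ p => ⟨g p.1 p.2, hg2 p.1 p.2⟩) n
  set f : ℕ → List ℕ := fun n => (F n).1 with hfdef
  have hf : ∀ n, Gg t i k P S (f n) (f (n + 1)) := fun n => hg1 (F n).1 (F n).2
  have hchain : ∀ n, f n <+: f (n + 1) := fun n => (hf n).2.2.1
  have hne : ∀ n, f n ≠ f (n + 1) := fun n => (hf n).2.2.2.1
  have hmono : ∀ m n, m ≤ n → f m <+: f n := by
    intro m n h
    induction h with
    | refl => exact List.prefix_refl _
    | step _ ih => exact ih.trans (hchain _)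
  have hlen : ∀ n, n ≤ (f n).length := by
    intro n
    induction n with
    | zero => exact Nat.zero_le _
    | succ n ih =>
      have := prefix_length_lt (hchain n) (hne n)
      omega
  -- the branch
  set α : ℕ → ℕ := fun m => (f (m + 1)).getD m 0 with hα
  have hget : ∀ n m, (hm : m < (f n).length) → (f n)[m] = α m := by
    intro n m hm
    have hm1 : m < (f (m + 1)).length := lt_of_lt_of_le (Nat.lt_succ_self m) (hlen (m + 1))
    have : α m = (f (m + 1))[m] := List.getD_eq_getElem _ _ hm1
    rw [this]
    rcases le_total n (m + 1) with h | h
    · exact List.IsPrefix.getElem (hmono n (m + 1) h) hm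
    · exact (List.IsPrefix.getElem (hmono (m + 1) n h) hm1).symm
  have hpref : ∀ n m, m ≤ (f n).length → pref α m = (f n).take m := by
    intro n m hm
    apply List.ext_getElem
    · rw [pref_length, List.length_take, Nat.min_eq_left hm]
    · intro p hp1 hp2
      rw [pref_length] at hp1
      rw [pref_getElem α hp1, List.getElem_take]
      exact (hget n p (lt_of_lt_of_le hp1 hm)).symm
  have hplay : IsPlayOf S α := by
    intro m
    rw [hpref m m (hlen m)]
    exact strategy_closed' hSW.1 ((hf m).1) (List.take_prefix _ _)
  obtain ⟨js, hio, hmin, hpar⟩ := hSW.2 α hplay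
  -- the active nodes
  have hact : ∀ n, ∃ w, Active t i k P S w ∧ f n <+: w ∧ w <+: f (n + 1) :=
    fun n => (hf n).2.2.2.2
  choose W hW1 hW2 hW3 using hact
  have hWlen : ∀ n, n ≤ (W n).length := fun n => le_trans (hlen n) (hW2 n).length_le
  have hWon : ∀ n, W n = pref α (W n).length := by
    intro n
    rw [hpref (n + 1) (W n).length (hW3 n).length_le]
    exact List.prefix_iff_eq_take.mp (hW3 n)
  choose Q hQpri hQPL hQanc using fun n => (hW1 n).2
  -- no ~ on the branch
  have hnoneg : ∀ m, t (pref α m) ≠ some Sym.neg := by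
    intro m hneg
    have hlm : m < (W (m + 1)).length := lt_of_lt_of_le (Nat.lt_succ_self m) (hWlen (m + 1))
    have hp : pref α m <+: W (m + 1) := by
      rw [hWon (m + 1)]; exact pref_prefix α hlm.le
    have hne' : pref α m ≠ W (m + 1) := by
      intro h
      have := congrArg List.length h
      rw [pref_length] at this
      omega
    exact (hQanc (m + 1) (pref α m) hp hne').1 hneg
  have hkept : ∀ m, kept t (pref α m) := by
    intro m
    have : tildeCount t (pref α m) = 0 := by
      apply List.countP_eq_zero.mpr
      intro p hp
      rw [List.mem_range, pref_length] at hp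
      simp only [decide_eq_true_eq]
      rw [pref_take α hp.le]
      exact hnoneg p
    unfold kept
    rw [this]
  have heff : ∀ m q, t (pref α m) = some (Sym.pri q) → effPri t (pref α m) = some q :=
    fun m q h => effPri_of_kept (hkept m) h
  -- pigeonhole on the active priorities
  have hQle : ∀ n, Q n ≤ k := fun n => (hQPL n).2.1
  have hpig : ∃ q0, {n | Q n = q0}.Infinite := by
    by_contra hfin; push_neg at hfin
    have hsub : (Set.univ : Set ℕ) ⊆ ⋃ q ∈ Finset.range (k + 1), {n | Q n = q} := by
      intro n _
      simp only [Set.mem_iUnion]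
      exact ⟨Q n, by simp [Nat.lt_succ_iff, hQle n]⟩
    exact Set.infinite_univ
      ((Set.Finite.biUnion (Finset.range (k + 1)).finite_toSet fun q _ => hfin q).subset hsub)
  obtain ⟨q0, hq0⟩ := hpig
  have hq0PL : PLosing i k P q0 := by
    obtain ⟨n, hn⟩ := hq0.nonempty
    rw [← hn]; exact hQPL n
  -- q0 occurs infinitely often as an effective priority
  have hq0io : InfOften t α q0 := by
    apply Set.infinite_of_not_bddAbove
    rintro ⟨B, hB⟩
    obtain ⟨n, hn, hnB⟩ := hq0.exists_gt B
    have hmem : (W n).length ∈ {m | effPri t (pref α m) = some q0} := by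
      have : t (pref α ((W n).length)) = some (Sym.pri q0) := by
        rw [← hWon n, hQpri n, hn]
      exact heff _ _ this
    exact absurd (hB hmem) (not_le_of_gt (lt_of_lt_of_le hnB (hWlen n)))
  -- q0 ≥ js and q0 ≤ js
  have h1 : ¬ q0 < js := fun h => hmin q0 h hq0io
  have h2 : q0 ≤ js := by
    obtain ⟨d, hd⟩ := hio.nonempty
    obtain ⟨q', hq', hkq⟩ := pri_of_effPri hd
    have hq'js : q' = js := hkq (hkept d)
    obtain ⟨n, hn, hnd⟩ := hq0.exists_gt d
    have hld : d < (W n).length := lt_of_lt_of_le hnd (hWlen n)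
    have hp : pref α d <+: W n := by
      rw [hWon n]; exact pref_prefix α hld.le
    have hne' : pref α d ≠ W n := by
      intro h
      have := congrArg List.length h
      rw [pref_length] at this
      omega
    have := (hQanc n (pref α d) hp hne').2 q' hq'
    rw [hn] at this  -- ambiguous? Q n = q0
    omega
  have hq0js : q0 = js := le_antisymm h2 (not_lt.mp h1)
  -- parity contradiction
  rw [hq0js] at hq0PL
  have hodd := hq0PL.2.2
  cases P with
  | true =>
    have he : Even js := hpar.mpr rfl
    have ho : Odd js := hodd.mpr rfl
    exact (Nat.not_odd_iff_even.mpr he) ho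
  | false =>
    have he : ¬ Even js := fun h => by simpa using hpar.mp h
    have ho : ¬ Odd js := fun h => by simpa using hodd.mp h
    rcases Nat.even_or_odd js with h | h
    · exact he h
    · exact ho h

end Branch
section Canon

open Classical

variable {t : Label} {i k : ℕ} {P : Bool} {S : List ℕ → Prop}

noncomputable def canonSig (t : Label) (i k : ℕ) (P : Bool) (S : List ℕ → Prop)
    (hwf : WellFounded (fun w u => Gg t i k P S u w))
    (hchild : ∀ u, Active t i k P S u → Gg t i k P S u (u ++ [0])) :
    List ℕ → ℕ → Ordinal :=
  hwf.fix fun u ih =>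
    if hA : Active t i k P S u then
      fun j' =>
        if j' < hA.2.choose then ih (u ++ [0]) (hchild u hA) j'
        else if j' = hA.2.choose then ih (u ++ [0]) (hchild u hA) hA.2.choose + 1
        else 0
    else
      lexSup i k P (fun w => if hw : Gg t i k P S u w then ih w hw else 0)
        {w | Suk t i k P S u w}

lemma canonSig_eq (hwf : WellFounded (fun w u => Gg t i k P S u w))
    (hchild : ∀ u, Active t i k P S u → Gg t i k P S u (u ++ [0])) (u : List ℕ) :
    canonSig t i k P S hwf hchild u =
      if hA : Active t i k P S u then
        (fun j' =>
          if j' < hA.2.choose then canonSig t i k P S hwf hchild (u ++ [0]) j'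
          else if j' = hA.2.choose then
            canonSig t i k P S hwf hchild (u ++ [0]) hA.2.choose + 1
          else 0)
      else
        lexSup i k P
          (fun w => if hw : Gg t i k P S u w then canonSig t i k P S hwf hchild w else 0)
          {w | Suk t i k P S u w} := by
  conv_lhs => rw [canonSig, WellFounded.fix_eq]
  rfl

theorem canonSig_sigDef (hwf : WellFounded (fun w u => Gg t i k P S u w))
    (hchild : ∀ u, Active t i k P S u → Gg t i k P S u (u ++ [0])) :
    SigDef t i k P S (canonSig t i k P S hwf hchild) := by
  constructor
  · intro u jj hA hpri j' _
    have hjj : hA.2.choose = jj := by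
      have := hA.2.choose_spec.1.symm.trans hpri
      simpa using this
    refine ⟨fun hcmp => ?_, fun hcmp => ?_, fun hcmp => ?_⟩
    · rw [canonSig_eq hwf hchild u]
      simp only [dif_pos hA, hjj]
      rw [if_pos hcmp]
    · subst hcmp
      rw [canonSig_eq hwf hchild u]
      simp only [dif_pos hA, hjj]
      simp
    · rw [canonSig_eq hwf hchild u]
      simp only [dif_pos hA, hjj]
      rw [if_neg (by omega), if_neg (by omega)]
  · intro u hSu hnA
    constructor
    · intro w hw
      have hgg := suk_gg hSu hnA hw
      have h1 := lexSup_ub (i := i) (k := k) (P := P) (f := fun w =>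
          if hw : Gg t i k P S u w then canonSig t i k P S hwf hchild w else 0)
        (D := {w | Suk t i k P S u w}) (w := w) hw
      simp only [dif_pos hgg] at h1
      rw [canonSig_eq hwf hchild u]
      simp only [dif_neg hnA]
      exact h1
    · intro τ hub
      rw [canonSig_eq hwf hchild u]
      simp only [dif_neg hnA]
      apply lexSup_least
      intro w hw
      rw [dif_pos (suk_gg hSu hnA hw)]
      exact hub w hw

end Canon

section Antitone

variable {t : Label} {i k : ℕ} {P : Bool} {S : List ℕ → Prop} {s : List ℕ → ℕ → Ordinal}

lemma sigdef_step (ht : IsTree t i k) (hS : IsStrategy t P S)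
    (hsd : SigDef t i k P S s) {x : List ℕ} {d : ℕ} (hxd : S (x ++ [d])) :
    sigLe i k P (s (x ++ [d])) (s x) := by
  have hSx : S x := hS.2.2.1 x d hxd
  by_cases hA : Active t i k P S x
  · obtain ⟨jx, hpri, hPLx, hanc⟩ := hA.2
    have hd0 : d = 0 := by
      have h2 := ht.2.1 x _ hpri d
      have h3 : t (x ++ [d]) ≠ none := hS.2.1 _ hxd
      rw [h2] at h3
      simp only [Sym.arity] at h3
      omega
    subst hd0
    have hrule := hsd.1 x jx hA hpri
    left
    refine ⟨jx, hPLx, ?_, fun j' hj' hl => ?_⟩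
    · rw [(hrule jx hPLx).2.1 rfl]; exact lt_add_one _
    · exact ((hrule j' hj').1 hl).symm
  · by_cases hA' : Active t i k P S (x ++ [d])
    · have hsuk : Suk t i k P S x (x ++ [d]) := by
        refine ⟨hA', ⟨[d], rfl⟩, ?_⟩
        intro z hAz hxz hzxd
        have hlen : z.length ≤ x.length + 1 := by
          have := hzxd.length_le; simpa using this
        rcases lt_or_eq_of_le hlen with h1 | h1
        · have hlz : z.length ≤ x.length := Nat.lt_succ_iff.mp h1
          have hz2 : z <+: x := List.prefix_of_prefix_length_le hzxd ⟨[d], rfl⟩ hlz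
          have hzx : z = x := List.IsPrefix.eq_of_length hz2 (le_antisymm hlz hxz.length_le)
          exact absurd (hzx ▸ hAz) hA
        · exact List.IsPrefix.eq_of_length hzxd (by simpa using h1)
      exact (hsd.2 x hSx hA).1 _ hsuk
    · exact (hsd.2 (x ++ [d]) hxd hA').2 (s x)
        (fun w hw => (hsd.2 x hSx hA).1 w (suk_subset hA hw))

lemma sigdef_antitone (ht : IsTree t i k) (hS : IsStrategy t P S)
    (hsd : SigDef t i k P S s) {u v : List ℕ} (hv : S v) (h : u <+: v) :
    sigLe i k P (s v) (s u) := by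
  obtain ⟨l, rfl⟩ := h
  induction l using List.reverseRecOn with
  | nil => simpa using sigLe_refl (s u)
  | append_singleton l d ih =>
    rw [← List.append_assoc] at hv ⊢
    exact sigLe_trans (sigdef_step ht hS hsd hv) (ih (hS.2.2.1 _ d hv))

end Antitone

section SupLe

open Classical

variable {t : Label} {i k : ℕ} {P : Bool} {S : List ℕ → Prop} {s : List ℕ → ℕ → Ordinal}

lemma sigdef_sup_le (hsd : SigDef t i k P S s) {u : List ℕ} (hSu : S u)
    (hnA : ¬ Active t i k P S u) {j : ℕ} {η : ℕ → Ordinal}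
    (hub : ∀ v, Suk t i k P S u v → sigLeBelow i k P j (s v) η) :
    sigLeBelow i k P j (s u) η := by
  set D' : Set (List ℕ) := {v | Suk t i k P S u v ∧ sigEqBelow i k P j (s v) η} with hD'
  set X := lexSup i k P s D' with hX
  set τ : ℕ → Ordinal := fun j' => if j' ≤ j then η j' else X j' with hτ
  have hXpre : D'.Nonempty → ∀ j', PLosing i k P j' → j' ≤ j → X j' = η j' := by
    intro hne
    exact lexSup_prefix hne (fun w hw j' hj' hl => hw.2 j' hj' hl)
  have hubτ : ∀ v, Suk t i k P S u v → sigLe i k P (s v) τ := by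
    intro v hv
    rcases hub v hv with hlt | heq
    · obtain ⟨j0, hPL0, hle0, hlt0, hb0⟩ := hlt
      left
      refine ⟨j0, hPL0, ?_, fun j'' hj'' hl => ?_⟩
      · simp only [hτ, if_pos hle0]; exact hlt0
      · simp only [hτ, if_pos (hl.le.trans hle0)]; exact hb0 j'' hj'' hl
    · have hvD : v ∈ D' := ⟨hv, heq⟩
      have hvX : sigLe i k P (s v) X := lexSup_ub hvD
      rcases hvX with hlt | heqX
      · obtain ⟨j1, hPL1, hlt1, hb1⟩ := hlt
        have hj1 : ¬ j1 ≤ j := by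
          intro hle
          rw [hXpre ⟨v, hvD⟩ j1 hPL1 hle] at hlt1
          exact absurd (heq j1 hPL1 hle) (ne_of_lt hlt1)
        left
        refine ⟨j1, hPL1, ?_, fun j'' hj'' hl => ?_⟩
        · simp only [hτ, if_neg hj1]; exact hlt1
        · by_cases hc : j'' ≤ j
          · simp only [hτ, if_pos hc]; exact heq j'' hj'' hc
          · simp only [hτ, if_neg hc]; exact hb1 j'' hj'' hl
      · right
        intro j'' hj''
        by_cases hc : j'' ≤ j
        · simp only [hτ, if_pos hc]; exact heq j'' hj'' hc
        · simp only [hτ, if_neg hc]; exact heqX j'' hj''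
  have hle : sigLe i k P (s u) τ := (hsd.2 u hSu hnA).2 τ hubτ
  have h1 : sigLeBelow i k P j (s u) τ := sigLe_toBelow hle
  have hτη : sigEqBelow i k P j τ η := fun j' _ hl => by simp only [hτ, if_pos hl]
  exact sigLeB_trans h1 (Or.inr hτη)

end SupLe
section Shift

variable {t : Label} {i k : ℕ} {P : Bool} {j : ℕ} {S S' : List ℕ → Prop}

lemma node1_nil : node1 (Sym.pri j) t [] = some (Sym.pri j) := rfl

lemma node1_cons (w : List ℕ) : node1 (Sym.pri j) t (0 :: w) = t w := rfl

lemma node1_cons_ne {d : ℕ} (hd : d ≠ 0) (w : List ℕ) :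
    node1 (Sym.pri j) t (d :: w) = none := by
  cases d with
  | zero => exact absurd rfl hd
  | succ e => rfl

lemma tildeCount_shift (w : List ℕ) :
    tildeCount (node1 (Sym.pri j) t) (0 :: w) = tildeCount t w := by
  unfold tildeCount
  rw [List.length_cons, List.range_succ_eq_map, List.countP_cons, List.countP_map]
  have h1 : ∀ x : ℕ, (node1 (Sym.pri j) t ((0 :: w).take (Nat.succ x)) = some Sym.neg) =
      (t (w.take x) = some Sym.neg) := by
    intro x; rw [List.take_succ_cons]; rfl
  simp only [Function.comp_def, h1]
  rw [show (0 :: w).take 0 = ([] : List ℕ) from rfl]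
  simp [node1]

lemma kept_shift (w : List ℕ) :
    kept (node1 (Sym.pri j) t) (0 :: w) ↔ kept t w := by
  unfold kept
  rw [tildeCount_shift]

lemma kept_nil (t0 : Label) : kept t0 [] := by
  unfold kept tildeCount
  simp

lemma ctrl_shift (w : List ℕ) :
    ctrl (node1 (Sym.pri j) t) (0 :: w) = ctrl t w := by
  unfold ctrl
  rw [node1_cons]
  cases htw : t w with
  | none => rfl
  | some s =>
    cases s with
    | pri q => rfl
    | neg => rfl
    | choice b =>
      simp only [kept_shift (t := t) (j := j) w]

lemma effPri_shift (w : List ℕ) :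
    effPri (node1 (Sym.pri j) t) (0 :: w) = effPri t w := by
  unfold effPri
  rw [node1_cons]
  cases htw : t w with
  | none => rfl
  | some s =>
    cases s with
    | pri q => simp only [kept_shift (t := t) (j := j) w]
    | neg => rfl
    | choice b => rfl

lemma effPri_root : effPri (node1 (Sym.pri j) t) [] = some j := by
  unfold effPri
  rw [node1_nil]
  have := kept_nil (node1 (Sym.pri j) t)
  simp [this]

lemma ctrl_root : ctrl (node1 (Sym.pri j) t) [] = none := by
  unfold ctrl
  rw [node1_nil]

lemma isTree_node1 (ht : IsTree t i k) (hj1 : i ≤ j) (hj2 : j ≤ k) :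
    IsTree (node1 (Sym.pri j) t) i k := by
  refine ⟨by simp [node1_nil], ?_, ?_, ?_⟩
  · intro u s hu d
    match u with
    | [] =>
      have hs : s = Sym.pri j := by
        rw [node1_nil] at hu; simpa using hu.symm
      subst hs
      match d with
      | 0 => simpa [node1_cons, Sym.arity] using ht.1
      | e + 1 =>
        simp only [List.nil_append]
        rw [node1_cons_ne (by omega)]
        simp [Sym.arity]
    | 0 :: w =>
      rw [node1_cons] at hu
      have : (0 :: w) ++ [d] = 0 :: (w ++ [d]) := rfl
      rw [this, node1_cons]
      exact ht.2.1 w s hu d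
    | (e + 1) :: w =>
      rw [node1_cons_ne (by omega)] at hu
      exact absurd hu (by simp)
  · intro u d hu
    match u with
    | [] => rw [node1_nil] at hu; exact absurd hu (by simp)
    | 0 :: w =>
      rw [node1_cons] at hu
      have : (0 :: w) ++ [d] = 0 :: (w ++ [d]) := rfl
      rw [this, node1_cons]
      exact ht.2.2.1 w d hu
    | (e + 1) :: w =>
      have : ((e + 1) :: w) ++ [d] = (e + 1) :: (w ++ [d]) := rfl
      rw [this, node1_cons_ne (by omega)]
  · intro u q hu
    match u with
    | [] =>
      rw [node1_nil] at hu
      have : q = j := by simpa using hu.symm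
      omega
    | 0 :: w =>
      rw [node1_cons] at hu
      exact ht.2.2.2 w q hu
    | (e + 1) :: w =>
      rw [node1_cons_ne (by omega)] at hu
      exact absurd hu (by simp)

lemma pref_succ (α : ℕ → ℕ) (n : ℕ) :
    pref α (n + 1) = α 0 :: pref (fun m => α (m + 1)) n := by
  unfold pref
  rw [List.range_succ_eq_map, List.map_cons, List.map_map]
  rfl

lemma branch_head {t0 : Label} {α : ℕ → ℕ} (h : IsBranch (node1 (Sym.pri j) t0) α) :
    α 0 = 0 := by
  have h1 := h 1
  rw [pref_succ] at h1
  by_contra hne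
  rw [show pref (fun m => α (m + 1)) 0 = [] from rfl, node1_cons_ne hne] at h1
  exact h1 rfl

lemma wellFormed_node1 (hwf : WellFormed t) : WellFormed (node1 (Sym.pri j) t) := by
  intro α hbr
  have hα0 := branch_head hbr
  set β : ℕ → ℕ := fun m => α (m + 1) with hβ
  have hc : ∀ n, pref α (n + 1) = 0 :: pref β n := by
    intro n; rw [pref_succ, hα0]
  have hbrβ : IsBranch t β := by
    intro n
    have := hbr (n + 1)
    rwa [hc, node1_cons] at this
  apply Set.Finite.subset ((hwf β hbrβ).image Nat.succ)
  intro n hn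
  match n with
  | 0 =>
    rw [Set.mem_setOf_eq, show pref α 0 = [] from rfl, node1_nil] at hn
    exact absurd hn (by simp)
  | m + 1 =>
    rw [Set.mem_setOf_eq, hc, node1_cons] at hn
    exact ⟨m, hn, rfl⟩

lemma goodTree_node1 (ht : GoodTree t i k) (hj1 : i ≤ j) (hj2 : j ≤ k) :
    GoodTree (node1 (Sym.pri j) t) i k :=
  ⟨isTree_node1 ht.1 hj1 hj2, wellFormed_node1 ht.2⟩

/- Active shift lemmas -/

lemma active_shift_down (hsh : ∀ w, S' (0 :: w) ↔ S w) {u : List ℕ}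
    (hA : Active (node1 (Sym.pri j) t) i k P S' (0 :: u)) : Active t i k P S u := by
  obtain ⟨hS'u, jv, hpri, hPL, hanc⟩ := hA
  refine ⟨(hsh u).mp hS'u, jv, hpri, hPL, ?_⟩
  intro w hw hne
  have hpre : (0 :: w) <+: (0 :: u) := List.cons_prefix_cons.mpr ⟨rfl, hw⟩
  have hne' : (0 :: w) ≠ (0 :: u) := fun h => hne (by injection h)
  exact hanc (0 :: w) hpre hne'

lemma active_shift_pri_le {u : List ℕ} {ju : ℕ}
    (hA : Active (node1 (Sym.pri j) t) i k P S' (0 :: u))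
    (hpri : t u = some (Sym.pri ju)) : ju ≤ j := by
  obtain ⟨hS'u, jv, hpriv, hPL, hanc⟩ := hA
  have hjv : jv = ju := by
    rw [node1_cons] at hpriv
    have := hpriv.symm.trans hpri
    simpa using this
  subst hjv
  have h1 := hanc [] ⟨0 :: u, rfl⟩ (by simp)
  exact h1.2 j node1_nil

lemma active_shift_up (hsh : ∀ w, S' (0 :: w) ↔ S w) {u : List ℕ} {ju : ℕ}
    (hA : Active t i k P S u) (hpri : t u = some (Sym.pri ju)) (hle : ju ≤ j) :
    Active (node1 (Sym.pri j) t) i k P S' (0 :: u) := by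
  obtain ⟨hSu, jv, hpriv, hPL, hanc⟩ := hA
  have hjv : jv = ju := by
    have := hpriv.symm.trans hpri
    simpa using this
  refine ⟨(hsh u).mpr hSu, jv, hpriv, hPL, ?_⟩
  intro w hw hne
  rcases List.prefix_cons_iff.mp hw with h0 | ⟨x, rfl, hx⟩
  · subst h0
    constructor
    · rw [node1_nil]; simp
    · intro j'' hj''
      rw [node1_nil] at hj''
      have : j = j'' := by simpa using hj''
      omega
  · have hne' : x ≠ u := fun h => hne (by rw [h])
    exact hanc x hx hne'

lemma active_root (hS0 : S' []) (hjPL : PLosing i k P j) :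
    Active (node1 (Sym.pri j) t) i k P S' [] := by
  refine ⟨hS0, j, node1_nil, hjPL, ?_⟩
  intro w hw hne
  exact absurd (List.prefix_nil.mp hw) hne

lemma suk_shift (hsh : ∀ w, S' (0 :: w) ↔ S w) {u : List ℕ}
    (hnA' : ¬ Active (node1 (Sym.pri j) t) i k P S' (0 :: u)) (hSu : S u)
    {w' : List ℕ} (hw : Suk (node1 (Sym.pri j) t) i k P S' (0 :: u) w') :
    ∃ v, w' = 0 :: v ∧ Gg t i k P S u v ∧ Active t i k P S v ∧ S' (0 :: v) := by
  obtain ⟨hAct, hpre, hmin⟩ := hw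
  match w' with
  | [] => exact absurd hpre.length_le (by simp)
  | c :: v =>
    obtain ⟨rfl, huv⟩ := List.cons_prefix_cons.mp hpre
    have hActv : Active t i k P S v := active_shift_down hsh hAct
    have hne : u ≠ v := by
      rintro rfl
      exact hnA' hAct
    exact ⟨v, rfl, ⟨hSu, hActv.1, huv, hne, v, hActv, huv, List.prefix_refl v⟩,
      hActv, hAct.1⟩

end Shift
section CD

variable {t : Label} {i k : ℕ} {P : Bool} {j : ℕ} {S S' : List ℕ → Prop}
  {s s' : List ℕ → ℕ → Ordinal}

theorem lemmaC (ht : IsTree t i k) (htj : IsTree (node1 (Sym.pri j) t) i k)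
    (hS : IsStrategy t P S) (hS' : IsStrategy (node1 (Sym.pri j) t) P S')
    (hsh : ∀ w, S' (0 :: w) ↔ S w)
    (hwf : WellFounded (fun w u => Gg t i k P S u w))
    (hsd : SigDef t i k P S s)
    (hsd' : SigDef (node1 (Sym.pri j) t) i k P S' s') :
    ∀ u, S u → sigLeBelow i k P j (s u) (s' (0 :: u)) := by
  intro u
  induction u using hwf.induction with
  | _ u IH =>
  intro hSu
  by_cases hA : Active t i k P S u
  · obtain ⟨ju, hpri, hPLu, hanc⟩ := hA.2
    have hchild := active_child_mem ht hS hA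
    have IH0 := IH (u ++ [0]) (gg_child ht hS hA) hchild
    by_cases hle : ju ≤ j
    · have hA' : Active (node1 (Sym.pri j) t) i k P S' (0 :: u) :=
        active_shift_up hsh hA hpri hle
      have hrule := hsd.1 u ju hA hpri
      have hrule' := hsd'.1 (0 :: u) ju hA' hpri
      exact sigLe_toBelow (sig_rule_mono hle hrule hrule' IH0)
    · have hgt : j < ju := not_le.mp hle
      have hrule := hsd.1 u ju hA hpri
      have heq : sigEqBelow i k P j (s u) (s (u ++ [0])) :=
        fun j' hj' hl => (hrule j' hj').1 (lt_of_le_of_lt hl hgt)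
      have hF : sigLe i k P (s' (0 :: (u ++ [0]))) (s' (0 :: u)) :=
        sigdef_antitone htj hS' hsd' ((hsh _).mpr hchild)
          (List.cons_prefix_cons.mpr ⟨rfl, ⟨[0], rfl⟩⟩)
      exact sigLeB_trans (Or.inr heq) (sigLeB_trans IH0 (sigLe_toBelow hF))
  · apply sigdef_sup_le hsd hSu hA
    intro v hv
    have hgg := suk_gg hSu hA hv
    have IHv := IH v hgg hv.1.1
    have hF : sigLe i k P (s' (0 :: v)) (s' (0 :: u)) :=
      sigdef_antitone htj hS' hsd' ((hsh v).mpr hv.1.1)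
        (List.cons_prefix_cons.mpr ⟨rfl, hv.2.1⟩)
    exact sigLeB_trans IHv (sigLe_toBelow hF)

theorem lemmaD (ht : IsTree t i k) (htj : IsTree (node1 (Sym.pri j) t) i k)
    (hS : IsStrategy t P S) (hS' : IsStrategy (node1 (Sym.pri j) t) P S')
    (hsh : ∀ w, S' (0 :: w) ↔ S w)
    (hwf : WellFounded (fun w u => Gg t i k P S u w))
    (hsd : SigDef t i k P S s)
    (hsd' : SigDef (node1 (Sym.pri j) t) i k P S' s') :
    ∀ u, S u → sigLeBelow i k P j (s' (0 :: u)) (s u) := by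
  intro u
  induction u using hwf.induction with
  | _ u IH =>
  intro hSu
  by_cases hcase : Active (node1 (Sym.pri j) t) i k P S' (0 :: u)
  · have hA : Active t i k P S u := active_shift_down hsh hcase
    obtain ⟨ju, hpri, hPLu, hanc⟩ := hA.2
    have hle : ju ≤ j := active_shift_pri_le hcase hpri
    have hchild := active_child_mem ht hS hA
    have IH0 := IH (u ++ [0]) (gg_child ht hS hA) hchild
    have hrule := hsd.1 u ju hA hpri
    have hrule' := hsd'.1 (0 :: u) ju hcase hpri
    exact sigLe_toBelow (sig_rule_mono hle hrule' hrule IH0)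
  · have hS'u : S' (0 :: u) := (hsh u).mpr hSu
    apply sigdef_sup_le hsd' hS'u hcase
    intro w' hw'
    obtain ⟨v, rfl, hgg, hActv, hS'v⟩ := suk_shift hsh hcase hSu hw'
    have IHv := IH v hgg hgg.2.1
    have hF : sigLe i k P (s v) (s u) := sigdef_antitone ht hS hsd hgg.2.1 hgg.2.2.1
    exact sigLeB_trans IHv (sigLe_toBelow hF)

end CD

section Transfer

variable {t : Label} {i k : ℕ} {P : Bool} {j : ℕ} {S S' : List ℕ → Prop}

lemma infOften_shift {α β : ℕ → ℕ} (hc : ∀ n, pref α (n + 1) = 0 :: pref β n) (q : ℕ) :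
    InfOften (node1 (Sym.pri j) t) α q ↔ InfOften t β q := by
  unfold InfOften
  constructor
  · intro h
    apply Set.infinite_of_not_bddAbove
    rintro ⟨B, hB⟩
    obtain ⟨n, hn, hnB⟩ := h.exists_gt (B + 1)
    obtain ⟨m, rfl⟩ : ∃ m, n = m + 1 := ⟨n - 1, by omega⟩
    rw [Set.mem_setOf_eq, hc m, effPri_shift] at hn
    exact absurd (hB hn) (by omega)
  · intro h
    apply Set.infinite_of_not_bddAbove
    rintro ⟨B, hB⟩
    obtain ⟨m, hm, hmB⟩ := h.exists_gt B
    have : effPri (node1 (Sym.pri j) t) (pref α (m + 1)) = some q := by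
      rw [hc m, effPri_shift]; exact hm
    exact absurd (hB this) (by omega)

lemma winsBranch_shift {α β : ℕ → ℕ} (hc : ∀ n, pref α (n + 1) = 0 :: pref β n) :
    WinsBranch t P β ↔ WinsBranch (node1 (Sym.pri j) t) P α := by
  constructor
  · rintro ⟨q, h1, h2, h3⟩
    exact ⟨q, (infOften_shift hc q).mpr h1,
      fun q' hq' h => h2 q' hq' ((infOften_shift hc q').mp h), h3⟩
  · rintro ⟨q, h1, h2, h3⟩
    exact ⟨q, (infOften_shift hc q).mp h1,
      fun q' hq' h => h2 q' hq' ((infOften_shift hc q').mpr h), h3⟩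

lemma shiftS_iff : ∀ w, ((0 :: w = []) ∨ ∃ w', (0 : ℕ) :: w = 0 :: w' ∧ S w') ↔ S w := by
  intro w
  constructor
  · rintro (h | ⟨w', heq, hw⟩)
    · exact absurd h (by simp)
    · have : w' = w := by injection heq with h1 h2; exact h2.symm
      exact this ▸ hw
  · intro h
    exact Or.inr ⟨w, rfl, h⟩

theorem shift_winning (ht : IsTree t i k) (hW : IsWinningStrategy t P S) :
    IsWinningStrategy (node1 (Sym.pri j) t) P
      (fun u => u = [] ∨ ∃ w, u = 0 :: w ∧ S w) := by
  obtain ⟨hS, hwin⟩ := hW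
  constructor
  · refine ⟨Or.inl rfl, ?_, ?_, ?_, ?_⟩
    · rintro u (rfl | ⟨w, rfl, hw⟩)
      · rw [node1_nil]; simp
      · rw [node1_cons]; exact hS.2.1 w hw
    · rintro u d (h | ⟨w, heq, hw⟩)
      · exact absurd h (by simp)
      · match u with
        | [] => exact Or.inl rfl
        | c :: u' =>
          have hc : c = 0 ∧ w = u' ++ [d] := by
            rw [List.cons_append] at heq
            exact ⟨by injection heq, by injection heq with h1 h2; exact h2.symm⟩
          obtain ⟨rfl, rfl⟩ := hc
          exact Or.inr ⟨u', rfl, hS.2.2.1 u' d hw⟩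
    · rintro u (rfl | ⟨w, rfl, hw⟩) hctrl
      · rw [ctrl_root] at hctrl
        exact absurd hctrl (by simp)
      · rw [ctrl_shift] at hctrl
        obtain ⟨d, hd1, hd2⟩ := hS.2.2.2.1 w hw hctrl
        refine ⟨d, Or.inr ⟨w ++ [d], rfl, hd1⟩, ?_⟩
        rintro d' (h | ⟨w', heq, hw'⟩)
        · exact absurd h (by simp)
        · have : w' = w ++ [d'] := by
            rw [List.cons_append] at heq
            injection heq with h1 h2
            exact h2.symm
          exact hd2 d' (show S (w ++ [d']) from this ▸ hw')
    · rintro u d (rfl | ⟨w, rfl, hw⟩) hctrl hne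
      · have hd : d = 0 := by
          by_contra hd
          rw [List.nil_append, show ([d] : List ℕ) = d :: [] from rfl,
            node1_cons_ne hd] at hne
          exact hne rfl
        subst hd
        exact Or.inr ⟨[], rfl, hS.1⟩
      · rw [ctrl_shift] at hctrl
        have hne' : t (w ++ [d]) ≠ none := hne
        exact Or.inr ⟨w ++ [d], rfl, hS.2.2.2.2 w d hw hctrl hne'⟩
  · intro α hplay
    have h1 := hplay 1
    have hα0 : α 0 = 0 := by
      rcases h1 with h | ⟨w, heq, hw⟩
      · rw [pref_succ] at h
        exact absurd h (by simp)
      · rw [pref_succ] at heq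
        injection heq
    set β : ℕ → ℕ := fun m => α (m + 1) with hβ
    have hc : ∀ n, pref α (n + 1) = 0 :: pref β n := by
      intro n; rw [pref_succ, hα0]
    have hplayβ : IsPlayOf S β := by
      intro n
      have := hplay (n + 1)
      rw [hc n] at this
      exact (shiftS_iff _).mp this
    exact (winsBranch_shift hc).mp (hwin β hplayβ)

theorem restrict_winning (ht : IsTree t i k)
    (hW' : IsWinningStrategy (node1 (Sym.pri j) t) P S') :
    IsWinningStrategy t P (fun w => S' (0 :: w)) := by
  obtain ⟨hS', hwin'⟩ := hW'
  have hroot : S' [0] := by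
    apply hS'.2.2.2.2 [] 0 hS'.1
    · rw [ctrl_root]; simp
    · exact ht.1
  constructor
  · refine ⟨hroot, ?_, ?_, ?_, ?_⟩
    · intro u hu
      exact hS'.2.1 (0 :: u) hu
    · intro u d h
      exact hS'.2.2.1 (0 :: u) d h
    · intro u hu hc
      rw [← ctrl_shift (t := t) (j := j)] at hc
      exact hS'.2.2.2.1 (0 :: u) hu hc
    · intro u d hu hc hne
      rw [← ctrl_shift (t := t) (j := j)] at hc
      exact hS'.2.2.2.2 (0 :: u) d hu hc hne
  · intro β hplayβ
    set α : ℕ → ℕ := fun n => match n with | 0 => 0 | m + 1 => β m with hα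
    have hc : ∀ n, pref α (n + 1) = 0 :: pref β n := by
      intro n; rw [pref_succ]
    have hplayα : IsPlayOf S' α := by
      intro n
      match n with
      | 0 => exact hS'.1
      | m + 1 => rw [hc m]; exact hplayβ m
    exact (winsBranch_shift hc).mpr (hwin' α hplayα)

end Transfer
/-- The effect of a `P`-losing priority on the signature: if `j` is `P`-losing
and `σ_P(t) = (θ_{i'},…,θ_{k'}) ≠ ∞`, then `σ_P(p_j(t))` is obtained from
`σ_P(t)` by incrementing the coordinate at `j` and zeroing all later ones. -/
theorem sig_prepend_losing_priority (i k : ℕ) (P : Bool) (t : Label) (j : ℕ)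
    (σ : ℕ → Ordinal)
    (ht : GoodTree t i k) (hj : PLosing i k P j)
    (hσ : IsSigOf t i k P σ) :
    IsSigOf (node1 (Sym.pri j) t) i k P
      (fun j' => if j' < j then σ j' else if j' = j then σ j + 1 else 0) := by
  classical
  obtain ⟨hval, hminσ⟩ := hσ
  obtain ⟨S0, s0, hW0, hsd0, hEq0⟩ := hval
  have htt' : IsTree (node1 (Sym.pri j) t) i k := isTree_node1 ht.1 hj.1 hj.2.1
  set σ' : ℕ → Ordinal := fun j' => if j' < j then σ j' else if j' = j then σ j + 1 else 0
    with hσ'def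
  have hσ'rule : ∀ j', PLosing i k P j' →
      (j' < j → σ' j' = σ j') ∧ (j' = j → σ' j' = σ j + 1) ∧ (j < j' → σ' j' = 0) := by
    intro j' _
    refine ⟨fun h => ?_, fun h => ?_, fun h => ?_⟩
    · simp only [hσ'def]; rw [if_pos h]
    · simp only [hσ'def]; rw [if_neg (show ¬ j' < j by omega), if_pos h]
    · simp only [hσ'def]; rw [if_neg (by omega), if_neg (by omega)]
  constructor
  · -- ValOf
    set S' : List ℕ → Prop := fun u => u = [] ∨ ∃ w, u = 0 :: w ∧ S0 w with hS'def
    have hW' : IsWinningStrategy (node1 (Sym.pri j) t) P S' := shift_winning ht.1 hW0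
    have hsh : ∀ w, S' (0 :: w) ↔ S0 w := fun w => shiftS_iff w
    have hwf' := gg_wf htt' hW'
    have hchild' : ∀ u, Active (node1 (Sym.pri j) t) i k P S' u →
        Gg (node1 (Sym.pri j) t) i k P S' u (u ++ [0]) :=
      fun u hA => gg_child htt' hW'.1 hA
    set s' := canonSig (node1 (Sym.pri j) t) i k P S' hwf' hchild' with hs'def
    have hsd' := canonSig_sigDef hwf' hchild'
    have hwf0 := gg_wf ht.1 hW0
    have hC := lemmaC ht.1 htt' hW0.1 hW'.1 hsh hwf0 hsd0 hsd'
    have hD := lemmaD ht.1 htt' hW0.1 hW'.1 hsh hwf0 hsd0 hsd'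
    have hroot : sigEqBelow i k P j (s0 []) (s' [0]) :=
      sigLeB_antisymm (hC [] hW0.1.1) (hD [] hW0.1.1)
    have hArt : Active (node1 (Sym.pri j) t) i k P S' [] :=
      active_root (Or.inl rfl) hj
    have hrule' := hsd'.1 [] j hArt node1_nil
    have hEqbase : sigEqBelow i k P j σ (s' [0]) :=
      sigEqBelow_trans (sigEq_toBelow hEq0) hroot
    have hEqσ' : sigEq i k P σ' (s' []) :=
      sig_rule_congr (le_refl j) hσ'rule hrule' hEqbase
    exact ⟨S', s', hW', hsd', hEqσ'⟩
  · intro τ hτ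
    obtain ⟨S'', s'', hW'', hsd'', hEqτ⟩ := hτ
    set S1 : List ℕ → Prop := fun w => S'' (0 :: w) with hS1def
    have hW1 : IsWinningStrategy t P S1 := restrict_winning ht.1 hW''
    have hsh1 : ∀ w, S'' (0 :: w) ↔ S1 w := fun w => Iff.rfl
    have hwf1 := gg_wf ht.1 hW1
    have hchild1 : ∀ u, Active t i k P S1 u → Gg t i k P S1 u (u ++ [0]) :=
      fun u hA => gg_child ht.1 hW1.1 hA
    set s1 := canonSig t i k P S1 hwf1 hchild1 with hs1def
    have hsd1 := canonSig_sigDef hwf1 hchild1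
    have hmin1 : sigLe i k P σ (s1 []) :=
      hminσ (s1 []) ⟨S1, s1, hW1, hsd1, sigEq_refl _⟩
    have hC1 := lemmaC ht.1 htt' hW1.1 hW''.1 hsh1 hwf1 hsd1 hsd''
    have hσle : sigLeBelow i k P j σ (s'' [0]) :=
      sigLeB_trans (sigLe_toBelow hmin1) (hC1 [] hW1.1.1)
    have hArt'' : Active (node1 (Sym.pri j) t) i k P S'' [] :=
      active_root hW''.1.1 hj
    have hrule'' := hsd''.1 [] j hArt'' node1_nil
    have hfin : sigLe i k P σ' (s'' []) :=
      sig_rule_mono (le_refl j) hσ'rule hrule'' hσle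
    exact sigLe_of_le_of_eq hfin (sigEq_symm hEqτ)

end UnambSig
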